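/- Let (Z,d) be a metric space, E ⊆ Z, Ω a set such that W ⊆ ℓ∞(Ω) is a metric space, f : E → W a 1-Lipschitz map, u₀ ∈ E, r > 0 and 0 < q < q' < 1. Suppose L̂(f,x) := sup{ρ(f(y),f(x))/d(x,y) : y ∈ E\{x}} ≤ q for every x ∈ E ∩ B(u₀,r). Then there exist a 1-Lipschitz extension F : Z → ℓ∞(Ω) of f and a number s ∈ (0,r) such that the restriction of F to B(u₀,s) is q'-Lipschitz. -/

import Mathlib

open Metric Set

/-- extension lemma: Let `E ⊆ Z`, `f : E → W ⊆ ℓ∞(Ω)` be `1`-Lipschitz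
(componentwise, with the sup metric), `u₀ ∈ E`, `r > 0` and `0 < q < q' < 1`.  If the
pointwise global slope satisfies `L̂(f,x) ≤ q` for every `x ∈ E ∩ B(u₀,r)` (i.e.
`dist(f(y),f(x)) ≤ q·d(x,y)` for such `x` and all `y ∈ E`), then there exist a `1`-Lipschitz
extension `F : Z → ℓ∞(Ω)` of `f` and `s ∈ (0,r)` such that `F` restricted to `B(u₀,s)` is
`q'`-Lipschitz. -/
theorem stmt13 {Z : Type*} [MetricSpace Z] {Ω : Type*}
    (E : Set Z) (f : Z → Ω → ℝ)
    (hf : ∀ x ∈ E, ∀ y ∈ E, ∀ ω : Ω, |f x ω - f y ω| ≤ dist x y)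
    (u₀ : Z) (hu₀ : u₀ ∈ E) (r : ℝ) (hr : 0 < r)
    (q q' : ℝ) (hq : 0 < q) (hqq' : q < q') (hq' : q' < 1)
    (hsmall : ∀ x ∈ E ∩ ball u₀ r, ∀ y ∈ E, ∀ ω : Ω,
      |f y ω - f x ω| ≤ q * dist x y) :
    ∃ (F : Z → Ω → ℝ) (s : ℝ), 0 < s ∧ s < r ∧
      (∀ x ∈ E, F x = f x) ∧
      (∀ x y : Z, ∀ ω : Ω, |F x ω - F y ω| ≤ dist x y) ∧
      (∀ x ∈ ball u₀ s, ∀ y ∈ ball u₀ s, ∀ ω : Ω,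
        |F x ω - F y ω| ≤ q' * dist x y) := by
  classical
  have hq1 : q < 1 := hqq'.trans hq'
  set ℓ : Z → ℝ := fun z => if z ∈ ball u₀ r then q else 1 with hℓdef
  have hℓq : ∀ z ∈ ball u₀ r, ℓ z = q := fun z hz => if_pos hz
  have hℓ1' : ∀ z, z ∉ ball u₀ r → ℓ z = 1 := fun z hz => if_neg hz
  have hℓ0 : ∀ z, 0 ≤ ℓ z := by
    intro z
    by_cases hz : z ∈ ball u₀ r
    · rw [hℓq z hz]; linarith
    · rw [hℓ1' z hz]; linarith
  have hℓ1 : ∀ z, ℓ z ≤ 1 := by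
    intro z
    by_cases hz : z ∈ ball u₀ r
    · rw [hℓq z hz]; linarith
    · rw [hℓ1' z hz]
  -- slope bound
  have hslope : ∀ z ∈ E, ∀ y ∈ E, ∀ ω : Ω, |f y ω - f z ω| ≤ ℓ z * dist z y := by
    intro z hz y hy ω
    by_cases hzb : z ∈ ball u₀ r
    · rw [hℓq z hzb]; exact hsmall z ⟨hz, hzb⟩ y hy ω
    · rw [hℓ1' z hzb, one_mul, abs_sub_comm]; exact hf z hz y hy ω
  set F : Z → Ω → ℝ := fun x ω => sInf ((fun z => f z ω + ℓ z * dist z x) '' E) with hFdef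
  have hu₀b : u₀ ∈ ball u₀ r := mem_ball_self hr
  have hne : ∀ x ω, ((fun z => f z ω + ℓ z * dist z x) '' E).Nonempty :=
    fun x ω => ⟨_, ⟨u₀, hu₀, rfl⟩⟩
  have hlow : ∀ x (ω : Ω), ∀ z ∈ E,
      f u₀ ω - dist u₀ x - r ≤ f z ω + ℓ z * dist z x := by
    intro x ω z hz
    by_cases hzb : z ∈ ball u₀ r
    · have h1 : |f z ω - f u₀ ω| ≤ q * dist u₀ z := hsmall u₀ ⟨hu₀, hu₀b⟩ z hz ω
      have h2 : dist u₀ z < r := mem_ball'.mp hzb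
      have h3 : 0 ≤ ℓ z * dist z x := mul_nonneg (hℓ0 z) dist_nonneg
      have h4 : q * dist u₀ z ≤ r := by nlinarith [dist_nonneg (x := u₀) (y := z)]
      have := abs_le.mp h1
      nlinarith [dist_nonneg (x := u₀) (y := x)]
    · have h1 : |f z ω - f u₀ ω| ≤ dist z u₀ := hf z hz u₀ hu₀ ω
      have h2 : dist u₀ z ≤ dist u₀ x + dist x z := dist_triangle u₀ x z
      have := abs_le.mp h1
      rw [hℓ1' z hzb, one_mul]
      have hzx : dist z x = dist x z := dist_comm z x
      have hzu : dist z u₀ = dist u₀ z := dist_comm z u₀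
      nlinarith
  have hbdd : ∀ x ω, BddBelow ((fun z => f z ω + ℓ z * dist z x) '' E) := by
    intro x ω
    exact ⟨f u₀ ω - dist u₀ x - r, by rintro t ⟨z, hz, rfl⟩; exact hlow x ω z hz⟩
  have hle : ∀ x (ω : Ω), ∀ z ∈ E, F x ω ≤ f z ω + ℓ z * dist z x :=
    fun x ω z hz => csInf_le (hbdd x ω) ⟨z, hz, rfl⟩
  -- F extends f
  have hext : ∀ x ∈ E, F x = f x := by
    intro x hx
    funext ω
    apply le_antisymm
    · have h := hle x ω x hx
      simpa using h
    · apply le_csInf (hne x ω)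
      rintro t ⟨z, hz, rfl⟩
      show f x ω ≤ f z ω + ℓ z * dist z x
      have := (abs_le.mp (hslope z hz x hx ω)).2
      linarith
  -- one-sided global Lipschitz
  have hlip1 : ∀ x y : Z, ∀ ω : Ω, F x ω ≤ F y ω + dist x y := by
    intro x y ω
    have : F x ω - dist x y ≤ F y ω := by
      apply le_csInf (hne y ω)
      rintro t ⟨z, hz, rfl⟩
      show F x ω - dist x y ≤ f z ω + ℓ z * dist z y
      have h1 : F x ω ≤ f z ω + ℓ z * dist z x := hle x ω z hz
      have h2 : dist z x ≤ dist z y + dist y x := dist_triangle z y x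
      have h3 : ℓ z * dist z x ≤ ℓ z * dist z y + dist x y := by
        have h5 := mul_le_mul_of_nonneg_left h2 (hℓ0 z)
        have h4 : ℓ z * dist y x ≤ 1 * dist y x :=
          mul_le_mul_of_nonneg_right (hℓ1 z) dist_nonneg
        rw [dist_comm x y]
        nlinarith
      linarith
    linarith
  -- the radius
  set s : ℝ := (1 - q) * r / (1 + q) with hsdef
  have hs0 : 0 < s := div_pos (by nlinarith) (by linarith)
  have hsr : s < r := by
    rw [hsdef, div_lt_iff₀ (by linarith : (0:ℝ) < 1 + q)]
    nlinarith
  have hkey : (1 - q) * r - s = q * s := by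
    field_simp [hsdef]
    have h : s * (1 + q) = (1 - q) * r := by
      rw [hsdef, div_mul_cancel₀]; exact ne_of_gt (by linarith)
    linear_combination -h
  -- local one-sided Lipschitz
  have hloc : ∀ x ∈ ball u₀ s, ∀ y ∈ ball u₀ s, ∀ ω : Ω,
      F x ω ≤ F y ω + q * dist x y := by
    intro x hx y hy ω
    have hxs : dist u₀ x < s := mem_ball'.mp hx
    have hys : dist u₀ y < s := mem_ball'.mp hy
    have hFxu : F x ω ≤ f u₀ ω + q * s := by
      have h1 : F x ω ≤ f u₀ ω + ℓ u₀ * dist u₀ x := hle x ω u₀ hu₀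
      rw [hℓq u₀ hu₀b] at h1
      nlinarith
    have : F x ω - q * dist x y ≤ F y ω := by
      apply le_csInf (hne y ω)
      rintro t ⟨z, hz, rfl⟩
      show F x ω - q * dist x y ≤ f z ω + ℓ z * dist z y
      by_cases hzb : z ∈ ball u₀ r
      · -- near point: use q-Lipschitz term
        have h1 : F x ω ≤ f z ω + ℓ z * dist z x := hle x ω z hz
        rw [hℓq z hzb] at h1 ⊢
        have h3 : dist z x ≤ dist z y + dist y x := dist_triangle z y x
        have h4 : q * dist z x ≤ q * dist z y + q * dist x y := by
          rw [dist_comm x y]; nlinarith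
        linarith
      · -- far point: the term is large
        have hzr : r ≤ dist u₀ z := by
          by_contra h; exact hzb (mem_ball'.mpr (lt_of_not_ge h))
        have h3 : |f z ω - f u₀ ω| ≤ q * dist u₀ z := hsmall u₀ ⟨hu₀, hu₀b⟩ z hz ω
        have h4 := (abs_le.mp h3).1
        have h5 : dist u₀ z ≤ dist u₀ y + dist y z := dist_triangle u₀ y z
        have h6 : f u₀ ω + q * s ≤ f z ω + ℓ z * dist z y := by
          rw [hℓ1' z hzb, one_mul, dist_comm z y]
          nlinarith
        have h7 : 0 ≤ q * dist x y := mul_nonneg hq.le dist_nonneg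
        linarith
    linarith
  refine ⟨F, s, hs0, hsr, hext, ?_, ?_⟩
  · intro x y ω
    rw [abs_sub_le_iff]
    refine ⟨by linarith [hlip1 x y ω], ?_⟩
    have := hlip1 y x ω
    rw [dist_comm y x] at this
    linarith
  · intro x hx y hy ω
    have h1 := hloc x hx y hy ω
    have h2 := hloc y hy x hx ω
    rw [dist_comm y x] at h2
    have hd : 0 ≤ dist x y := dist_nonneg
    rw [abs_sub_le_iff]
    constructor <;> nlinarith
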